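/- Let K be a field and let V₁, …, Vₙ be finitely many pairwise distinct discrete valuation rings contained in K, each with fraction field K. Then the intersection O = V₁ ∩ … ∩ Vₙ is a semilocal Dedekind domain (a Dedekind domain with finitely many maximal ideals) with fraction field K. -/

import Mathlib

open IsDedekindDomain Multiplicative

local notation "ℤₘ₀" => WithZero (Multiplicative ℤ)

noncomputable section Aux0
namespace Stmt0Aux

/-- coercion of an integer exponent into `ℤₘ₀`. -/
def oz (a : ℤ) : ℤₘ₀ := (Multiplicative.ofAdd a : Multiplicative ℤ)

lemma oz_ne_zero (a : ℤ) : oz a ≠ 0 := WithZero.coe_ne_zero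

lemma oz_le {a b : ℤ} : oz a ≤ oz b ↔ a ≤ b := by
  simp [oz]

lemma oz_lt {a b : ℤ} : oz a < oz b ↔ a < b := by
  simp [oz]

lemma oz_mul (a b : ℤ) : oz a * oz b = oz (a + b) := by
  simp [oz, ← WithZero.coe_mul, ← ofAdd_add]

lemma oz_zero : oz 0 = 1 := rfl

lemma oz_div (a b : ℤ) : oz a / oz b = oz (a - b) := by
  simp [oz, ← WithZero.coe_div, ← ofAdd_sub]

lemma oz_inv (a : ℤ) : (oz a)⁻¹ = oz (-a) := by
  simp [oz, ← WithZero.coe_inv, ← ofAdd_neg]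

lemma oz_pow (a : ℤ) (m : ℕ) : (oz a) ^ m = oz (m * a) := by
  rw [oz, ← WithZero.coe_pow, ← ofAdd_nsmul]
  norm_num [oz]

lemma oz_zpow (a : ℤ) (m : ℤ) : (oz a) ^ m = oz (m * a) := by
  rw [oz, ← WithZero.coe_zpow, ← ofAdd_zsmul]
  norm_num [oz]

/-- exponent of a nonzero element of `ℤₘ₀`. -/
def ex (γ : ℤₘ₀) : ℤ := if h : γ = 0 then 0 else Multiplicative.toAdd (WithZero.unzero h)

lemma ex_spec {γ : ℤₘ₀} (h : γ ≠ 0) : γ = oz (ex γ) := by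
  rw [ex, dif_neg h, oz]
  simp

lemma ex_oz (a : ℤ) : ex (oz a) = a := by
  have h := ex_spec (oz_ne_zero a)
  have := oz_le.mp h.le
  have := oz_le.mp h.ge
  omega

variable {K : Type*} [Field K]

/-- The height-one prime (the maximal ideal) of a DVR subring. -/
def hos (V : Subring K) [IsDiscreteValuationRing ↥V] : HeightOneSpectrum ↥V :=
  ⟨IsLocalRing.maximalIdeal ↥V, inferInstance, IsDiscreteValuationRing.not_a_field ↥V⟩

/-- The valuation on `K` attached to a DVR subring with fraction field `K`. -/
def val (V : Subring K) [IsDiscreteValuationRing ↥V] [IsFractionRing ↥V K] : Valuation K ℤₘ₀ :=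
  (hos V).valuation K

variable (V : Subring K) [IsDiscreteValuationRing ↥V] [IsFractionRing ↥V K]

lemma val_mem_le (x : ↥V) : val V (x : K) ≤ 1 :=
  (hos V).valuation_le_one (K := K) x

lemma mem_iff (x : K) : x ∈ V ↔ val V x ≤ 1 := by
  constructor
  · intro hx
    exact val_mem_le V ⟨x, hx⟩
  · intro hx
    by_contra hxV
    have hx0 : x ≠ 0 := fun h => hxV (h ▸ V.zero_mem)
    rcases ValuationRing.isInteger_or_isInteger ↥V x with ⟨b, hb⟩ | ⟨b, hb⟩
    · exact hxV (hb ▸ b.2)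
    · have hbK : (b : K) = x⁻¹ := hb
      have hb0 : b ≠ 0 := by
        rintro rfl
        rw [show ((0 : ↥V) : K) = 0 from rfl] at hbK
        exact hx0 (inv_eq_zero.mp hbK.symm)
      have hbu : ¬ IsUnit b := by
        intro hu
        obtain ⟨c, hc⟩ := isUnit_iff_exists_inv.mp hu
        apply hxV
        have hcK : (b : K) * (c : K) = 1 := by
          have := congrArg (Subring.subtype V) hc
          simpa using this
        rw [hbK] at hcK
        field_simp at hcK
        rw [← hcK]; exact c.2
      have hlt : val V x⁻¹ < 1 := by
        rw [← hbK]
        have h1 : val V ((algebraMap ↥V K) b) = (hos V).intValuation b :=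
          (hos V).valuation_of_algebraMap b
        rw [show ((b : K)) = (algebraMap ↥V K) b from rfl, h1,
          (hos V).intValuation_lt_one_iff_dvd, Ideal.dvd_iff_le,
          Ideal.span_singleton_le_iff_mem]
        exact (IsLocalRing.mem_maximalIdeal b).mpr (mem_nonunits_iff.mpr hbu)
      have hone : val V x * val V x⁻¹ = 1 := by
        rw [← Valuation.map_mul, mul_inv_cancel₀ hx0, Valuation.map_one]
      have : (1 : ℤₘ₀) < 1 := by
        calc (1:ℤₘ₀) = val V x * val V x⁻¹ := hone.symm
          _ ≤ 1 * val V x⁻¹ := mul_le_mul_left hx _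
          _ = val V x⁻¹ := one_mul _
          _ < 1 := hlt
      exact absurd this (lt_irrefl 1)

lemma exists_val (m : ℤ) : ∃ x : K, x ≠ 0 ∧ val V x = oz m := by
  obtain ⟨π, hπ⟩ := (hos V).valuation_exists_uniformizer K
  refine ⟨π ^ (-m), ?_, ?_⟩
  · have h1 : val V π ≠ 0 := by
      show (hos V).valuation K π ≠ 0
      rw [hπ]; exact WithZero.coe_ne_zero
    have hπ0 : π ≠ 0 := by
      intro h; rw [h, Valuation.map_zero] at h1; exact h1 rfl
    exact zpow_ne_zero _ hπ0
  · have hπ' : val V π = oz (-1) := hπ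
    rw [map_zpow₀, hπ', oz_zpow]
    norm_num


section Approx

variable {K : Type*} [Field K] {n : ℕ} (w : Fin n → Valuation K ℤₘ₀)

lemma wne (i : Fin n) {x : K} (hx : x ≠ 0) : w i x ≠ 0 := (Valuation.ne_zero_iff _).mpr hx

lemma le_one_iff_ex {γ : ℤₘ₀} (h : γ ≠ 0) : γ ≤ 1 ↔ ex γ ≤ 0 := by
  conv_lhs => rw [ex_spec h, ← oz_zero]
  rw [oz_le]

lemma lt_one_iff_ex {γ : ℤₘ₀} (h : γ ≠ 0) : γ < 1 ↔ ex γ < 0 := by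
  conv_lhs => rw [ex_spec h, ← oz_zero]
  rw [oz_lt]

lemma one_lt_iff_ex {γ : ℤₘ₀} (h : γ ≠ 0) : 1 < γ ↔ 0 < ex γ := by
  conv_lhs => rw [ex_spec h, ← oz_zero]
  rw [oz_lt]

lemma incomp (hA : ∀ i (m : ℤ), ∃ x : K, x ≠ 0 ∧ w i x = oz m)
    (hB : ∀ i j : Fin n, (∀ x : K, w i x ≤ 1 ↔ w j x ≤ 1) → i = j)
    {i j : Fin n} (hij : i ≠ j) : ∃ x : K, w i x ≤ 1 ∧ 1 < w j x := by
  by_contra hcon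
  push_neg at hcon
  by_cases hsym : ∀ x : K, w j x ≤ 1 → w i x ≤ 1
  · exact hij (hB i j fun x => ⟨fun h => hcon x h, fun h => hsym x h⟩)
  push_neg at hsym
  obtain ⟨x, hxj, hxi⟩ := hsym
  have hx0 : x ≠ 0 := by rintro rfl; simp at hxi
  have hxe : 1 ≤ ex (w i x) := by
    have := (one_lt_iff_ex (wne w i hx0)).mp hxi
    omega
  have key : ∀ z : K, z ≠ 0 → w j z ≤ 1 := by
    intro z hz
    set m : ℕ := (ex (w i z)).toNat with hm
    have hmz : ex (w i z) ≤ (m : ℤ) := Int.self_le_toNat _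
    have h1 : w i (z * x⁻¹ ^ m) ≤ 1 := by
      rw [Valuation.map_mul, map_pow, map_inv₀, ex_spec (wne w i hz),
        ex_spec (wne w i hx0), oz_inv, oz_pow, oz_mul, ← oz_zero, oz_le]
      nlinarith [mul_le_mul_of_nonneg_left hxe (Int.ofNat_nonneg m)]
    have h2 := hcon _ h1
    have h3 : w j z = w j (z * x⁻¹ ^ m) * (w j x) ^ m := by
      rw [← map_pow, ← Valuation.map_mul]
      congr 1
      field_simp
      rw [one_div, inv_pow, inv_mul_cancel₀ (pow_ne_zero _ hx0)]
    rw [h3]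
    exact mul_le_one' h2 (pow_le_one' hxj m)
  obtain ⟨z, hz0, hz⟩ := hA j 1
  have := key z hz0
  rw [hz, ← oz_zero, oz_le] at this
  omega

lemma pair (hA : ∀ i (m : ℤ), ∃ x : K, x ≠ 0 ∧ w i x = oz m)
    (hB : ∀ i j : Fin n, (∀ x : K, w i x ≤ 1 ↔ w j x ≤ 1) → i = j)
    {i j : Fin n} (hij : i ≠ j) : ∃ x : K, x ≠ 0 ∧ 1 < w i x ∧ w j x < 1 := by
  obtain ⟨u, hu1, hu2⟩ := incomp w hA hB hij.symm
  obtain ⟨s, hs1, hs2⟩ := incomp w hA hB hij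
  have hs0 : s ≠ 0 := by rintro rfl; simp at hs2
  have hu0 : u ≠ 0 := by rintro rfl; simp at hu2
  have eiu : 1 ≤ ex (w i u) := by
    have := (one_lt_iff_ex (wne w i hu0)).mp hu2; omega
  have eis : ex (w i s) ≤ 0 := (le_one_iff_ex (wne w i hs0)).mp hs1
  have eju : ex (w j u) ≤ 0 := (le_one_iff_ex (wne w j hu0)).mp hu1
  have ejs : 1 ≤ ex (w j s) := by
    have := (one_lt_iff_ex (wne w j hs0)).mp hs2; omega
  refine ⟨u / s, div_ne_zero hu0 hs0, ?_, ?_⟩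
  · rw [map_div₀, ex_spec (wne w i hu0), ex_spec (wne w i hs0), oz_div, ← oz_zero, oz_lt]
    omega
  · rw [map_div₀, ex_spec (wne w j hu0), ex_spec (wne w j hs0), oz_div, ← oz_zero, oz_lt]
    omega

lemma sep (hA : ∀ i (m : ℤ), ∃ x : K, x ≠ 0 ∧ w i x = oz m)
    (hB : ∀ i j : Fin n, (∀ x : K, w i x ≤ 1 ↔ w j x ≤ 1) → i = j)
    (i : Fin n) (s : Finset (Fin n)) (his : i ∉ s) :
    ∃ x : K, x ≠ 0 ∧ 1 < w i x ∧ ∀ j ∈ s, w j x < 1 := by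
  classical
  revert his
  induction s using Finset.induction_on with
  | empty =>
    intro _
    obtain ⟨x, hx0, hx⟩ := hA i 1
    refine ⟨x, hx0, ?_, by simp⟩
    rw [hx, ← oz_zero, oz_lt]; omega
  | @insert j s hjs ih =>
    intro his
    have hij : i ≠ j := fun h => his (h ▸ Finset.mem_insert_self j s)
    have his' : i ∉ s := fun h => his (Finset.mem_insert_of_mem h)
    obtain ⟨y, hy0, hyi, hys⟩ := ih his'
    obtain ⟨z, hz0, hzi, hzj⟩ := pair w hA hB hij
    set m : ℕ := 1 + s.sup (fun t => (ex (w t z)).toNat) with hm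
    have hm1 : 1 ≤ m := Nat.le_add_right 1 _
    have hmb : ∀ t ∈ s, ex (w t z) < (m : ℤ) := by
      intro t ht
      have h1 : ex (w t z) ≤ ((ex (w t z)).toNat : ℤ) := Int.self_le_toNat _
      have h2 : (ex (w t z)).toNat ≤ s.sup (fun t => (ex (w t z)).toNat) :=
        Finset.le_sup (f := fun t => (ex (w t z)).toNat) ht
      omega
    have eiy : 1 ≤ ex (w i y) := by
      have := (one_lt_iff_ex (wne w i hy0)).mp hyi; omega
    have eiz : 1 ≤ ex (w i z) := by
      have := (one_lt_iff_ex (wne w i hz0)).mp hzi; omega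
    have ejz : ex (w j z) ≤ -1 := by
      have := (lt_one_iff_ex (wne w j hz0)).mp hzj; omega
    have esy : ∀ t ∈ s, ex (w t y) ≤ -1 := by
      intro t ht
      have := (lt_one_iff_ex (wne w t hy0)).mp (hys t ht); omega
    by_cases hjy : w j y ≤ 1
    · -- x := y ^ m * z
      have ejy : ex (w j y) ≤ 0 := (le_one_iff_ex (wne w j hy0)).mp hjy
      have hx0 : y ^ m * z ≠ 0 := mul_ne_zero (pow_ne_zero _ hy0) hz0
      have hval : ∀ t : Fin n, w t (y ^ m * z) = oz ((m : ℤ) * ex (w t y) + ex (w t z)) := by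
        intro t
        conv_lhs => rw [Valuation.map_mul, map_pow, ex_spec (wne w t hy0),
          ex_spec (wne w t hz0)]
        rw [oz_pow, oz_mul]
      refine ⟨y ^ m * z, hx0, ?_, ?_⟩
      · rw [hval i, ← oz_zero, oz_lt]
        nlinarith [mul_le_mul_of_nonneg_left eiy (Int.ofNat_nonneg m)]
      · intro t ht
        rcases Finset.mem_insert.mp ht with rfl | ht'
        · rw [hval t, ← oz_zero, oz_lt]
          nlinarith [mul_le_mul_of_nonneg_left ejy (Int.ofNat_nonneg m)]
        · rw [hval t, ← oz_zero, oz_lt]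
          have h4 := esy t ht'
          have h5 := hmb t ht'
          nlinarith [mul_le_mul_of_nonneg_left h4 (Int.ofNat_nonneg m)]
    · -- x := z * (y ^ m / (1 + y ^ m))
      replace hjy : 1 < w j y := lt_of_not_ge hjy
      have ejy : 1 ≤ ex (w j y) := by
        have := (one_lt_iff_ex (wne w j hy0)).mp hjy; omega
      have hwu : ∀ t : Fin n, w t (y ^ m) = oz ((m : ℤ) * ex (w t y)) := by
        intro t
        conv_lhs => rw [map_pow, ex_spec (wne w t hy0)]
        rw [oz_pow]
      have hwju : 1 < w j (y ^ m) := by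
        rw [hwu j, ← oz_zero, oz_lt]
        nlinarith [mul_le_mul_of_nonneg_left ejy (Int.ofNat_nonneg m)]
      have hwiu : 1 < w i (y ^ m) := by
        rw [hwu i, ← oz_zero, oz_lt]
        nlinarith [mul_le_mul_of_nonneg_left eiy (Int.ofNat_nonneg m)]
      have hd0 : (1 : K) + y ^ m ≠ 0 := by
        intro h
        have h1 : y ^ m = -1 := by linear_combination h
        rw [h1, Valuation.map_neg, Valuation.map_one] at hwju
        exact lt_irrefl 1 hwju
      have hdj : w j (1 + y ^ m) = w j (y ^ m) :=
        Valuation.map_add_eq_of_lt_right _ (by simpa using hwju)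
      have hdi : w i (1 + y ^ m) = w i (y ^ m) :=
        Valuation.map_add_eq_of_lt_right _ (by simpa using hwiu)
      have hds : ∀ t ∈ s, w t (1 + y ^ m) = 1 := by
        intro t ht
        apply Valuation.map_one_add_of_lt
        rw [hwu t, ← oz_zero, oz_lt]
        nlinarith [mul_le_mul_of_nonneg_left (esy t ht) (Int.ofNat_nonneg m)]
      have hu0 : y ^ m / (1 + y ^ m) ≠ 0 := div_ne_zero (pow_ne_zero _ hy0) hd0
      refine ⟨z * (y ^ m / (1 + y ^ m)), mul_ne_zero hz0 hu0, ?_, ?_⟩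
      · rw [Valuation.map_mul, map_div₀, hdi, div_self (wne w i (pow_ne_zero _ hy0)), mul_one]
        exact hzi
      · intro t ht
        rcases Finset.mem_insert.mp ht with rfl | ht'
        · rw [Valuation.map_mul, map_div₀, hdj, div_self (wne w t (pow_ne_zero _ hy0)), mul_one]
          exact hzj
        · rw [Valuation.map_mul, map_div₀, hds t ht', div_one, hwu t,
            ex_spec (wne w t hz0), oz_mul, ← oz_zero, oz_lt]
          have h4 := esy t ht'
          have h5 := hmb t ht'
          nlinarith [mul_le_mul_of_nonneg_left h4 (Int.ofNat_nonneg m)]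

lemma idem (hA : ∀ i (m : ℤ), ∃ x : K, x ≠ 0 ∧ w i x = oz m)
    (hB : ∀ i j : Fin n, (∀ x : K, w i x ≤ 1 ↔ w j x ≤ 1) → i = j)
    (i : Fin n) (m : ℕ) (hm : 1 ≤ m) :
    ∃ e : K, w i (e - 1) ≤ oz (-(m : ℤ)) ∧ ∀ j, j ≠ i → w j e ≤ oz (-(m : ℤ)) := by
  classical
  obtain ⟨x, hx0, hxi, hxs⟩ := sep w hA hB i (Finset.univ.erase i) (Finset.notMem_erase i _)
  have hxj : ∀ j, j ≠ i → w j x < 1 := fun j hj =>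
    hxs j (Finset.mem_erase.mpr ⟨hj, Finset.mem_univ j⟩)
  have exi : 1 ≤ ex (w i x) := by
    have := (one_lt_iff_ex (wne w i hx0)).mp hxi; omega
  have hwu : ∀ t : Fin n, w t (x ^ m) = oz ((m : ℤ) * ex (w t x)) := by
    intro t
    conv_lhs => rw [map_pow, ex_spec (wne w t hx0)]
    rw [oz_pow]
  have hwiu : 1 < w i (x ^ m) := by
    rw [hwu i, ← oz_zero, oz_lt]
    nlinarith [mul_le_mul_of_nonneg_left exi (Int.ofNat_nonneg m)]
  have hd0 : (1 : K) + x ^ m ≠ 0 := by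
    intro h
    have h1 : x ^ m = -1 := by linear_combination h
    rw [h1, Valuation.map_neg, Valuation.map_one] at hwiu
    exact lt_irrefl 1 hwiu
  have hdi : w i (1 + x ^ m) = w i (x ^ m) :=
    Valuation.map_add_eq_of_lt_right _ (by simpa using hwiu)
  refine ⟨x ^ m / (1 + x ^ m), ?_, ?_⟩
  · have he : x ^ m / (1 + x ^ m) - 1 = -(1 / (1 + x ^ m)) := by
      field_simp
      ring
    rw [he, Valuation.map_neg, one_div, map_inv₀, hdi, hwu i, oz_inv, oz_le]
    nlinarith [mul_le_mul_of_nonneg_left exi (Int.ofNat_nonneg m)]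
  · intro j hj
    have exj : ex (w j x) ≤ -1 := by
      have := (lt_one_iff_ex (wne w j hx0)).mp (hxj j hj); omega
    have hdj : w j (1 + x ^ m) = 1 := by
      apply Valuation.map_one_add_of_lt
      rw [hwu j, ← oz_zero, oz_lt]
      nlinarith [mul_le_mul_of_nonneg_left exj (Int.ofNat_nonneg m)]
    rw [map_div₀, hdj, div_one, hwu j, oz_le]
    nlinarith [mul_le_mul_of_nonneg_left exj (Int.ofNat_nonneg m)]

theorem approx (hA : ∀ i (m : ℤ), ∃ x : K, x ≠ 0 ∧ w i x = oz m)
    (hB : ∀ i j : Fin n, (∀ x : K, w i x ≤ 1 ↔ w j x ≤ 1) → i = j)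
    (hn : 0 < n) (k : Fin n → ℤ) : ∃ x : K, x ≠ 0 ∧ ∀ i, w i x = oz (k i) := by
  classical
  choose t ht0 htv using fun i => hA i (k i)
  set m : ℕ := 1 + (Finset.univ.sup fun p : Fin n × Fin n => (ex (w p.1 (t p.2)) - k p.1).toNat)
    with hm
  have hm1 : 1 ≤ m := Nat.le_add_right 1 _
  have hmb : ∀ i j : Fin n, ex (w i (t j)) - k i < (m : ℤ) := by
    intro i j
    have h1 : ex (w i (t j)) - k i ≤ ((ex (w i (t j)) - k i).toNat : ℤ) := Int.self_le_toNat _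
    have h2 : (ex (w i (t j)) - k i).toNat ≤
        Finset.univ.sup fun p : Fin n × Fin n => (ex (w p.1 (t p.2)) - k p.1).toNat :=
      Finset.le_sup (f := fun p : Fin n × Fin n => (ex (w p.1 (t p.2)) - k p.1).toNat)
        (Finset.mem_univ (i, j))
    omega
  choose e he1 he2 using fun i => idem w hA hB i m hm1
  have hval : ∀ i, w i (∑ j, t j * e j) = oz (k i) := by
    intro i
    have hsum : ∑ j, t j * e j
        = t i + (t i * (e i - 1) + ∑ j ∈ Finset.univ.erase i, t j * e j) := by
      rw [← Finset.add_sum_erase _ _ (Finset.mem_univ i)]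
      ring
    have hga : w i (t i * (e i - 1)) < oz (k i) := by
      rw [Valuation.map_mul, htv i]
      calc oz (k i) * w i (e i - 1) ≤ oz (k i) * oz (-(m : ℤ)) :=
            mul_le_mul_right (he1 i) _
        _ = oz (k i - m) := by rw [oz_mul]; ring_nf
        _ < oz (k i) := by rw [oz_lt]; omega
    have hgb : w i (∑ j ∈ Finset.univ.erase i, t j * e j) < oz (k i) := by
      apply Valuation.map_sum_lt _ (oz_ne_zero _)
      intro j hj
      have hji : j ≠ i := (Finset.mem_erase.mp hj).1
      calc w i (t j * e j) = w i (t j) * w i (e j) := Valuation.map_mul _ _ _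
        _ ≤ oz (ex (w i (t j))) * oz (-(m : ℤ)) := by
            rw [← ex_spec (wne w i (ht0 j))]
            exact mul_le_mul_right (he2 j i (Ne.symm hji)) _
        _ = oz (ex (w i (t j)) - m) := by rw [oz_mul]; ring_nf
        _ < oz (k i) := by rw [oz_lt]; have := hmb i j; omega
    have hg : w i (t i * (e i - 1) + ∑ j ∈ Finset.univ.erase i, t j * e j) < oz (k i) :=
      Valuation.map_add_lt _ hga hgb
    rw [hsum, Valuation.map_add_eq_of_lt_left _ (by rw [htv i]; exact hg), htv i]
  refine ⟨∑ j, t j * e j, ?_, hval⟩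
  intro h
  have := hval ⟨0, hn⟩
  rw [h, Valuation.map_zero] at this
  exact oz_ne_zero _ this.symm

end Approx

end Stmt0Aux

end Aux0

open Stmt0Aux in
/-- An intersection of finitely many pairwise distinct discrete valuation rings inside a
field `K`, each with fraction field `K`, is a semilocal Dedekind domain with fraction
field `K`. -/
theorem stmt_0 {K : Type*} [Field K] {n : ℕ} (hn : 0 < n) (V : Fin n → Subring K)
    (hDVR : ∀ i, IsDiscreteValuationRing (V i))
    (hfrac : ∀ i, IsFractionRing (V i) K)
    (hdist : Function.Injective V) :
    IsDedekindDomain ↥(⨅ i, V i) ∧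
      {I : Ideal ↥(⨅ i, V i) | I.IsMaximal}.Finite ∧
      IsFractionRing ↥(⨅ i, V i) K := by
  classical
  let w : Fin n → Valuation K ℤₘ₀ := fun i => @val K _ (V i) (hDVR i) (hfrac i)
  have hmem : ∀ (i : Fin n) (x : K), x ∈ V i ↔ w i x ≤ 1 := fun i x =>
    @mem_iff K _ (V i) (hDVR i) (hfrac i) x
  have hA : ∀ (i : Fin n) (m : ℤ), ∃ x : K, x ≠ 0 ∧ w i x = oz m := fun i m =>
    @exists_val K _ (V i) (hDVR i) (hfrac i) m
  have hB : ∀ i j : Fin n, (∀ x : K, w i x ≤ 1 ↔ w j x ≤ 1) → i = j := by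
    intro i j h
    apply hdist
    ext x
    rw [hmem i x, hmem j x, h x]
  have happ := approx w hA hB hn
  set O : Subring K := ⨅ i, V i with hO
  have hOmem : ∀ x : K, x ∈ O ↔ ∀ i, w i x ≤ 1 := by
    intro x
    rw [hO, Subring.mem_iInf]
    exact forall_congr' fun i => hmem i x
  have hcoe0 : ∀ x : ↥O, x ≠ 0 → (x : K) ≠ 0 := by
    intro x hx h
    exact hx (Subtype.ext h)
  -- the dominant-diagonal construction
  have hdom : ∀ (a : Fin n → ↥O), (∀ i, (a i : K) ≠ 0) →
      ∃ c : ↥O, (∀ j, w j (c : K) = w j (a j : K)) ∧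
        ∀ I : Ideal ↥O, (∀ i, a i ∈ I) → c ∈ I := by
    intro a ha
    have h1 := fun i => happ (fun j => if j = i then 0 else
      min (ex (w j ((a j : K))) - ex (w j ((a i : K))) - 1) 0)
    choose t ht0 htv using h1
    have htO : ∀ i, t i ∈ O := by
      intro i
      rw [hOmem]
      intro j
      rw [htv i j, ← oz_zero, oz_le]
      split <;> omega
    refine ⟨∑ i, ⟨t i, htO i⟩ * a i, ?_,
      fun I hI => Ideal.sum_mem I fun i _ => I.mul_mem_left _ (hI i)⟩
    intro j
    have hcoe : ((∑ i, (⟨t i, htO i⟩ : ↥O) * a i : ↥O) : K) = ∑ i, t i * (a i : K) := by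
      push_cast
      rfl
    have hterm : ∀ i : Fin n, w j ((t i) * (a i : K))
        = oz ((if j = i then 0 else
          min (ex (w j ((a j : K))) - ex (w j ((a i : K))) - 1) 0) + ex (w j (a i : K))) := by
      intro i
      conv_lhs => rw [Valuation.map_mul, ex_spec (wne w j (ha i)), htv i j]
      rw [oz_mul]
    rw [hcoe, Valuation.map_sum_eq_of_lt (w j) (Finset.mem_univ j) ?_]
    · rw [hterm j, if_pos rfl, zero_add, ← ex_spec (wne w j (ha j))]
    · intro i hi
      have hij : i ≠ j := by
        rintro rfl
        simp only [Finset.mem_sdiff, Finset.mem_singleton] at hi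
        exact hi.2 trivial
      rw [hterm i, if_neg (Ne.symm hij), hterm j, if_pos rfl, oz_lt]
      omega
  let i0 : Fin n := ⟨0, hn⟩
  -- fraction field
  have hfr : IsFractionRing ↥O K := by
    refine ⟨fun y => ?_, fun z => ?_, fun {x y} h => ⟨1, by simpa using Subtype.ext h⟩⟩
    · have hy0 : (y : ↥O) ≠ 0 := nonZeroDivisors.ne_zero y.2
      exact isUnit_iff_ne_zero.mpr (hcoe0 _ hy0)
    · by_cases hz : z = 0
      · exact ⟨(0, 1), by simp [hz]⟩
      · obtain ⟨b, hb0, hbv⟩ := happ (fun i => min (-ex (w i z)) 0)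
        have hbO : b ∈ O := by
          rw [hOmem]
          intro i
          rw [hbv i, ← oz_zero, oz_le]
          omega
        have hzbO : z * b ∈ O := by
          rw [hOmem]
          intro i
          conv_lhs => rw [Valuation.map_mul, ex_spec (wne w i hz), hbv i]
          rw [oz_mul, ← oz_zero, oz_le]
          omega
        have hbnzd : (⟨b, hbO⟩ : ↥O) ∈ nonZeroDivisors ↥O :=
          mem_nonZeroDivisors_of_ne_zero (fun h => hb0 (congrArg Subtype.val h))
        refine ⟨(⟨z * b, hzbO⟩, ⟨⟨b, hbO⟩, hbnzd⟩), ?_⟩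
        rfl
  -- principal ideal ring
  have hPID : IsPrincipalIdealRing ↥O := by
    constructor
    intro I
    by_cases hI : I = ⊥
    · rw [hI]; exact bot_isPrincipal
    · obtain ⟨x0, hx0I, hx00⟩ := Submodule.exists_mem_ne_zero_of_ne_bot hI
      have hex : ∀ i : Fin n, ∃ M : ℤ,
          (∃ a : ↥O, a ∈ I ∧ a ≠ 0 ∧ ex (w i (a : K)) = M) ∧
          ∀ x : ↥O, x ∈ I → x ≠ 0 → ex (w i (x : K)) ≤ M := by
        intro i
        have hbdd : ∀ z : ℤ, (∃ a : ↥O, a ∈ I ∧ a ≠ 0 ∧ ex (w i (a : K)) = z) → z ≤ 0 := by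
          rintro z ⟨a, _, ha0, rfl⟩
          exact (le_one_iff_ex (wne w i (hcoe0 a ha0))).mp ((hOmem _).mp a.2 i)
        obtain ⟨M, hM1, hM2⟩ := Int.exists_greatest_of_bdd
          (P := fun z => ∃ a : ↥O, a ∈ I ∧ a ≠ 0 ∧ ex (w i (a : K)) = z) ⟨0, hbdd⟩
          ⟨ex (w i (x0 : K)), x0, hx0I, hx00, rfl⟩
        exact ⟨M, hM1, fun x hxI hx0 => hM2 _ ⟨x, hxI, hx0, rfl⟩⟩
      choose M hM1 hM2 using hex
      choose a haI ha0 haM using hM1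
      obtain ⟨c, hc1, hc2⟩ := hdom a (fun i => hcoe0 _ (ha0 i))
      have hcI : c ∈ I := hc2 I haI
      have hc0 : (c : K) ≠ 0 := by
        intro h
        have := hc1 i0
        rw [h, Valuation.map_zero] at this
        exact wne w i0 (hcoe0 _ (ha0 i0)) this.symm
      refine ⟨⟨c, le_antisymm (fun x hxI => ?_) ?_⟩⟩
      · by_cases hx0 : x = 0
        · rw [hx0]; exact Ideal.zero_mem _
        · have hdO : (x : K) / (c : K) ∈ O := by
            rw [hOmem]
            intro j
            rw [map_div₀, hc1 j]
            conv_lhs => rw [ex_spec (wne w j (hcoe0 x hx0)),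
              ex_spec (wne w j (hcoe0 _ (ha0 j)))]
            rw [oz_div, ← oz_zero, oz_le]
            have h1 := hM2 j x hxI hx0
            have h2 := haM j
            omega
          refine Ideal.mem_span_singleton'.mpr ⟨⟨(x : K) / (c : K), hdO⟩, ?_⟩
          apply Subtype.ext
          push_cast
          exact div_mul_cancel₀ _ hc0
      · rw [Submodule.span_le, Set.singleton_subset_iff]
        exact hcI
  haveI := hPID
  refine ⟨inferInstance, ?_, hfr⟩
  -- finitely many maximal ideals
  let P : Fin n → Ideal ↥O := fun i =>
    { carrier := {x : ↥O | w i (x : K) < 1}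
      add_mem' := fun {x y} hx hy => by
        simp only [Set.mem_setOf_eq] at *
        have : ((x + y : ↥O) : K) = (x : K) + (y : K) := rfl
        rw [this]
        exact Valuation.map_add_lt _ hx hy
      zero_mem' := by
        simp only [Set.mem_setOf_eq, ZeroMemClass.coe_zero, Valuation.map_zero]
        exact zero_lt_one
      smul_mem' := fun c x hx => by
        simp only [Set.mem_setOf_eq, smul_eq_mul] at *
        have h1 : ((c * x : ↥O) : K) = (c : K) * (x : K) := rfl
        have h2 : w i (c : K) ≤ 1 := (hOmem _).mp c.2 i
        rw [h1, Valuation.map_mul]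
        calc w i (c : K) * w i (x : K) ≤ 1 * w i (x : K) := mul_le_mul_left h2 _
          _ = w i (x : K) := one_mul _
          _ < 1 := hx }
  have hsub : {I : Ideal ↥O | I.IsMaximal} ⊆ Set.range P := by
    intro J hJ
    have hJm : J.IsMaximal := hJ
    have hle : ∃ i, J ≤ P i := by
      by_contra hcon
      push_neg at hcon
      have h1 : ∀ i, ∃ x : ↥O, x ∈ J ∧ w i (x : K) = 1 := by
        intro i
        obtain ⟨x, hxJ, hxP⟩ := Set.not_subset.mp (hcon i)
        refine ⟨x, hxJ, ?_⟩
        have hle1 : w i (x : K) ≤ 1 := (hOmem _).mp x.2 i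
        have : ¬ w i (x : K) < 1 := hxP
        exact le_antisymm hle1 (not_lt.mp this)
      choose x hxJ hx1 using h1
      have hx0 : ∀ i, (x i : K) ≠ 0 := by
        intro i h
        have := hx1 i
        rw [h, Valuation.map_zero] at this
        exact zero_ne_one this
      obtain ⟨c, hc1, hc2⟩ := hdom x hx0
      have hcJ : c ∈ J := hc2 J hxJ
      have hc0 : (c : K) ≠ 0 := by
        intro h
        have := hc1 i0
        rw [h, Valuation.map_zero, hx1 i0] at this
        exact zero_ne_one this
      have hcinvO : (c : K)⁻¹ ∈ O := by
        rw [hOmem]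
        intro i
        rw [map_inv₀, hc1 i, hx1 i, inv_one]
      have hcu : IsUnit (c : ↥O) := by
        refine isUnit_iff_exists_inv.mpr ⟨⟨(c : K)⁻¹, hcinvO⟩, ?_⟩
        apply Subtype.ext
        push_cast
        exact mul_inv_cancel₀ hc0
      exact hJm.ne_top (Ideal.eq_top_of_isUnit_mem J hcJ hcu)
    obtain ⟨i, hi⟩ := hle
    have hPne : P i ≠ ⊤ := by
      intro h
      have h1 : (1 : ↥O) ∈ P i := h ▸ Submodule.mem_top
      have : w i ((1 : ↥O) : K) < 1 := h1
      rw [OneMemClass.coe_one, Valuation.map_one] at this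
      exact lt_irrefl 1 this
    exact ⟨i, (hJm.eq_of_le hPne hi).symm⟩
  exact Set.Finite.subset (Set.finite_range P) hsub
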